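/- Let C ∈ 𝒮ⁿ₊ (symmetric positive semidefinite) and define J(X) = ⟨C, X⟩ + I_{𝒮ⁿ₊}(X) on symmetric matrices. Then J is a gauge and its polar satisfies J°(Z) = inf{α ≥ 0 : αC - Z ∈ 𝒮ⁿ₊}. -/

import Mathlib

open Matrix
open scoped Classical


variable {N : ℕ}

lemma isSymm_of_psd {M : Matrix (Fin N) (Fin N) ℝ} (h : M.PosSemidef) : M.IsSymm := by
  have := h.isHermitian
  rwa [Matrix.IsHermitian, conjTranspose_eq_transpose_of_trivial] at this

lemma isHermitian_of_isSymm {M : Matrix (Fin N) (Fin N) ℝ} (h : M.IsSymm) : M.IsHermitian := by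
  rwa [Matrix.IsHermitian, conjTranspose_eq_transpose_of_trivial]

lemma trace_tTmul_nonneg (D : Matrix (Fin N) (Fin N) ℝ) : 0 ≤ (Dᴴ * D).trace := by
  rw [Matrix.trace]
  refine Finset.sum_nonneg fun i _ => ?_
  simp only [Matrix.diag_apply, Matrix.mul_apply, Matrix.conjTranspose_apply, star_trivial]
  exact Finset.sum_nonneg fun j _ => mul_self_nonneg _

lemma psd_trace_mul_nonneg {M X : Matrix (Fin N) (Fin N) ℝ}
    (hM : M.PosSemidef) (hX : X.PosSemidef) : 0 ≤ (M * X).trace := by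
  obtain ⟨B, hB⟩ : ∃ B : Matrix (Fin N) (Fin N) ℝ, M = Bᴴ * B := by
    open scoped MatrixOrder in exact CStarAlgebra.nonneg_iff_eq_star_mul_self.mp hM.nonneg
  obtain ⟨A, hA⟩ : ∃ A : Matrix (Fin N) (Fin N) ℝ, X = Aᴴ * A := by
    open scoped MatrixOrder in exact CStarAlgebra.nonneg_iff_eq_star_mul_self.mp hX.nonneg
  rw [hB, hA]
  calc (0:ℝ) ≤ ((B * Aᴴ)ᴴ * (B * Aᴴ)).trace := trace_tTmul_nonneg _
    _ = (A * (Bᴴ * (B * Aᴴ))).trace := by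
        simp [Matrix.mul_assoc]
    _ = (Bᴴ * B * (Aᴴ * A)).trace := by
        rw [Matrix.trace_mul_comm]
        simp [Matrix.mul_assoc]

lemma vecMulVec_psd (x : Fin N → ℝ) : (Matrix.vecMulVec x x).PosSemidef := by
  refine Matrix.posSemidef_iff_dotProduct_mulVec.mpr ⟨?_, ?_⟩
  · rw [Matrix.IsHermitian]
    ext i j
    simp [Matrix.vecMulVec_apply, mul_comm]
  · intro y
    have : dotProduct (star y) (Matrix.vecMulVec x x *ᵥ y) = (dotProduct x y) * (dotProduct x y) := by
      simp only [star_trivial, Matrix.mulVec, Matrix.vecMulVec_apply, dotProduct]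
      simp only [Finset.mul_sum, Finset.sum_mul]
      rw [Finset.sum_comm]
      refine Finset.sum_congr rfl fun i _ => Finset.sum_congr rfl fun j _ => by ring
    rw [this]
    exact mul_self_nonneg _

lemma trace_mul_vecMulVec (M : Matrix (Fin N) (Fin N) ℝ) (x : Fin N → ℝ) :
    (M * Matrix.vecMulVec x x).trace = dotProduct x (M *ᵥ x) := by
  simp only [Matrix.trace, Matrix.diag_apply, Matrix.mul_apply, Matrix.vecMulVec_apply,
    dotProduct, Matrix.mulVec]
  refine Finset.sum_congr rfl fun i _ => ?_
  rw [Finset.mul_sum]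
  refine Finset.sum_congr rfl fun j _ => by ring

lemma psd_of_trace {M : Matrix (Fin N) (Fin N) ℝ} (hM : M.IsSymm)
    (h : ∀ X : Matrix (Fin N) (Fin N) ℝ, X.PosSemidef → 0 ≤ (M * X).trace) : M.PosSemidef := by
  refine Matrix.posSemidef_iff_dotProduct_mulVec.mpr ⟨isHermitian_of_isSymm hM, fun x => ?_⟩
  have := h _ (vecMulVec_psd x)
  rw [trace_mul_vecMulVec] at this
  simpa using this

lemma psd_smul {M : Matrix (Fin N) (Fin N) ℝ} (hM : M.PosSemidef) {a : ℝ} (ha : 0 ≤ a) :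
    (a • M).PosSemidef := by
  refine Matrix.posSemidef_iff_dotProduct_mulVec.mpr ⟨?_, ?_⟩
  · have h1 := isSymm_of_psd hM
    rw [Matrix.IsHermitian, conjTranspose_eq_transpose_of_trivial, Matrix.transpose_smul, h1]
  · intro x
    rw [Matrix.smul_mulVec, dotProduct_smul]
    exact mul_nonneg ha (hM.dotProduct_mulVec_nonneg x)

lemma isSymm_smul_sub {C Z : Matrix (Fin N) (Fin N) ℝ} (hC : C.IsSymm) (hZ : Z.IsSymm)
    (a : ℝ) : (a • C - Z).IsSymm := by
  rw [Matrix.IsSymm, Matrix.transpose_sub, Matrix.transpose_smul, hC, hZ]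

lemma trace_smul_sub_mul (a : ℝ) (C Z X : Matrix (Fin N) (Fin N) ℝ) :
    ((a • C - Z) * X).trace = a * (C * X).trace - (Z * X).trace := by
  rw [Matrix.sub_mul, Matrix.trace_sub, Matrix.smul_mul, Matrix.trace_smul, smul_eq_mul]

/-- For `C ∈ 𝒮ⁿ₊`, the function `J(X) = ⟨C,X⟩ + I_{𝒮ⁿ₊}(X)` on symmetric
matrices is a gauge (convex, nonnegative, positively homogeneous, `J 0 = 0`), and its
polar `J°(Z) = inf {μ ≥ 0 : ⟨Z,X⟩ ≤ μ J(X) for all X ∈ 𝒮ⁿ}` satisfies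
`J°(Z) = inf {α ≥ 0 : αC - Z ∈ 𝒮ⁿ₊}`. -/
theorem semidefinite_conic_gauge_polar
    (N : ℕ) (C : Matrix (Fin N) (Fin N) ℝ) (hC : C.PosSemidef)
    (J : Matrix (Fin N) (Fin N) ℝ → EReal)
    (hJ : ∀ X, J X = if X.PosSemidef then (((C * X).trace : ℝ) : EReal) else ⊤) :
    (∀ X, X.IsSymm → 0 ≤ J X) ∧
    J 0 = 0 ∧
    (∀ α : ℝ, 0 < α → ∀ X, X.IsSymm → J (α • X) = (α : EReal) * J X) ∧
    (∀ X Y, X.IsSymm → Y.IsSymm → ∀ a b : ℝ, 0 ≤ a → 0 ≤ b → a + b = 1 →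
      J (a • X + b • Y) ≤ (a : EReal) * J X + (b : EReal) * J Y) ∧
    (∀ Z : Matrix (Fin N) (Fin N) ℝ, Z.IsSymm →
      sInf {μ : EReal | ∃ mu : ℝ, 0 ≤ mu ∧ μ = (mu : EReal) ∧
          ∀ X, X.IsSymm → (((Z * X).trace : ℝ) : EReal) ≤ (mu : EReal) * J X} =
        sInf {α : EReal | ∃ a : ℝ, 0 ≤ a ∧ α = (a : EReal) ∧ (a • C - Z).PosSemidef}) := by
  -- J is nonnegative everywhere
  have hnn : ∀ X : Matrix (Fin N) (Fin N) ℝ, 0 ≤ J X := by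
    intro X
    rw [hJ X]
    split
    · rename_i hX
      exact_mod_cast (psd_trace_mul_nonneg hC hX)
    · exact le_top
  refine ⟨fun X _ => hnn X, ?_, ?_, ?_, ?_⟩
  · -- J 0 = 0
    rw [hJ 0, if_pos Matrix.PosSemidef.zero]
    simp
  · -- homogeneity
    intro α hα X _
    by_cases hX : X.PosSemidef
    · have hsm : (α • X).PosSemidef := psd_smul hX hα.le
      rw [hJ, hJ, if_pos hsm, if_pos hX, Matrix.mul_smul, Matrix.trace_smul, smul_eq_mul,
        EReal.coe_mul]
    · have hsm : ¬ (α • X).PosSemidef := by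
        intro h
        have : (α⁻¹ • (α • X)).PosSemidef := psd_smul h (inv_nonneg.mpr hα.le)
        rw [smul_smul, inv_mul_cancel₀ hα.ne', one_smul] at this
        exact hX this
      rw [hJ, hJ, if_neg hsm, if_neg hX, EReal.coe_mul_top_of_pos hα]
  · -- convexity
    intro X Y hXs hYs a b ha hb hab
    by_cases hX : X.PosSemidef <;> by_cases hY : Y.PosSemidef
    · have hsum : (a • X + b • Y).PosSemidef := (psd_smul hX ha).add (psd_smul hY hb)
      rw [hJ, hJ, hJ, if_pos hsum, if_pos hX, if_pos hY]
      rw [Matrix.mul_add, Matrix.trace_add, Matrix.mul_smul, Matrix.mul_smul,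
        Matrix.trace_smul, Matrix.trace_smul, smul_eq_mul, smul_eq_mul]
      rw [EReal.coe_add, EReal.coe_mul, EReal.coe_mul]
    · -- Y not PSD
      rcases eq_or_lt_of_le hb with hb0 | hbpos
      · have ha1 : a = 1 := by linarith
        subst ha1
        rw [← hb0, zero_smul, add_zero, one_smul]
        have : ((0:ℝ) : EReal) * J Y = 0 := by
          rw [EReal.coe_zero, zero_mul]
        rw [this, add_zero]
        rw [EReal.coe_one, one_mul]
      · have hJY : J Y = ⊤ := by rw [hJ, if_neg hY]
        have hne : (a : EReal) * J X ≠ ⊥ := by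
          have : 0 ≤ (a : EReal) * J X := mul_nonneg (by exact_mod_cast ha) (hnn X)
          intro h; rw [h] at this; exact absurd this (by simp)
        rw [hJY, EReal.coe_mul_top_of_pos hbpos, EReal.add_top_of_ne_bot hne]
        exact le_top
    · -- X not PSD
      rcases eq_or_lt_of_le ha with ha0 | hapos
      · have hb1 : b = 1 := by linarith
        subst hb1
        rw [← ha0, zero_smul, zero_add, one_smul]
        have : ((0:ℝ) : EReal) * J X = 0 := by
          rw [EReal.coe_zero, zero_mul]
        rw [this, zero_add]
        rw [EReal.coe_one, one_mul]
      · have hJX : J X = ⊤ := by rw [hJ, if_neg hX]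
        have hne : (b : EReal) * J Y ≠ ⊥ := by
          have : 0 ≤ (b : EReal) * J Y := mul_nonneg (by exact_mod_cast hb) (hnn Y)
          intro h; rw [h] at this; exact absurd this (by simp)
        rw [hJX, EReal.coe_mul_top_of_pos hapos, EReal.top_add_of_ne_bot hne]
        exact le_top
    · have hJX : J X = ⊤ := by rw [hJ, if_neg hX]
      rcases eq_or_lt_of_le ha with ha0 | hapos
      · have hb1 : b = 1 := by linarith
        subst hb1
        rw [← ha0, zero_smul, zero_add, one_smul]
        have : ((0:ℝ) : EReal) * J X = 0 := by
          rw [EReal.coe_zero, zero_mul]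
        rw [this, zero_add]
        rw [EReal.coe_one, one_mul]
      · have hne : (b : EReal) * J Y ≠ ⊥ := by
          have : 0 ≤ (b : EReal) * J Y := mul_nonneg (by exact_mod_cast hb) (hnn Y)
          intro h; rw [h] at this; exact absurd this (by simp)
        rw [hJX, EReal.coe_mul_top_of_pos hapos, EReal.top_add_of_ne_bot hne]
        exact le_top
  · -- the polar formula
    intro Z hZ
    set S1 : Set EReal := {μ : EReal | ∃ mu : ℝ, 0 ≤ mu ∧ μ = (mu : EReal) ∧
        ∀ X, X.IsSymm → (((Z * X).trace : ℝ) : EReal) ≤ (mu : EReal) * J X} with hS1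
    -- membership criterion for positive a
    have hmem : ∀ a : ℝ, 0 < a → (a • C - Z).PosSemidef → (a : EReal) ∈ S1 := by
      intro a hapos hpsd
      refine ⟨a, hapos.le, rfl, fun X hXs => ?_⟩
      by_cases hX : X.PosSemidef
      · rw [hJ, if_pos hX, ← EReal.coe_mul, EReal.coe_le_coe_iff]
        have h0 := psd_trace_mul_nonneg hpsd hX
        rw [trace_smul_sub_mul] at h0
        linarith
      · rw [hJ, if_neg hX, EReal.coe_mul_top_of_pos hapos]
        exact le_top
    apply le_antisymm
    · -- sInf S1 ≤ sInf S2
      refine le_sInf ?_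
      rintro α ⟨a, ha0, rfl, hpsd⟩
      rcases eq_or_lt_of_le ha0 with ha0' | hapos
      · -- a = 0 : every t > 0 is in S1
        have hT : ∀ t : ℝ, 0 < t → (t : EReal) ∈ S1 := by
          intro t ht
          refine hmem t ht ?_
          rw [← ha0'] at hpsd
          have heq : t • C - Z = t • C + ((0:ℝ) • C - Z) := by
            rw [zero_smul, zero_sub, sub_eq_add_neg]
          rw [heq]
          exact (psd_smul hC ht.le).add hpsd
        rw [← ha0', EReal.coe_zero]
        by_contra hcon
        have hlt : (0 : EReal) < sInf S1 := lt_of_not_ge hcon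
        obtain ⟨r, hr0, hrlt⟩ := EReal.exists_between_coe_real hlt
        have : sInf S1 ≤ (r : EReal) := sInf_le (hT r (by exact_mod_cast hr0))
        exact absurd (this.trans_lt hrlt) (lt_irrefl _)
      · exact sInf_le (hmem a hapos hpsd)
    · -- sInf S2 ≤ sInf S1  via  S1 ⊆ S2
      refine sInf_le_sInf ?_
      rintro μ ⟨mu, hmu0, rfl, hprop⟩
      refine ⟨mu, hmu0, rfl, ?_⟩
      apply psd_of_trace (isSymm_smul_sub (isSymm_of_psd hC) hZ mu)
      intro X hXpsd
      have hXs := isSymm_of_psd hXpsd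
      have h1 := hprop X hXs
      rw [hJ, if_pos hXpsd, ← EReal.coe_mul, EReal.coe_le_coe_iff] at h1
      rw [trace_smul_sub_mul]
      linarith
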